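/- Suppose t, s ∈ ℝ satisfy A(t,s) > 4 r e^{s+t}. Then 4r² · (sinh φ(t,s))³ · (∂²φ/∂s∂t)(t,s) = (a cos β − r)(e^{s+t} + d₂² e^{−s−t}) + (a cos β + r)(d₁² e^{s−t} + e^{t−s}). -/

import Mathlib

open Real

noncomputable section

/-- Inverse hyperbolic cosine. -/
def arcosh (x : ℝ) : ℝ := Real.log (x + Real.sqrt (x ^ 2 - 1))

/-- `d₁ = √(a² + r² − 2ar cos β)`. -/
def d1 (a r β : ℝ) : ℝ := Real.sqrt (a ^ 2 + r ^ 2 - 2 * a * r * Real.cos β)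

/-- `d₂ = √(a² + r² + 2ar cos β)`. -/
def d2 (a r β : ℝ) : ℝ := Real.sqrt (a ^ 2 + r ^ 2 + 2 * a * r * Real.cos β)

/-- `A(t,s) = e^{2s+2t} + e^{2t} + d₁² e^{2s} + d₂²`. -/
def Afun (a r β t s : ℝ) : ℝ :=
  Real.exp (2 * s + 2 * t) + Real.exp (2 * t) + d1 a r β ^ 2 * Real.exp (2 * s) +
    d2 a r β ^ 2

/-- `φ(t,s) = arcosh(A(t,s)/(4 r e^{s+t}))`, the lifted distance function. -/
def phi (a r β t s : ℝ) : ℝ := _root_.arcosh (Afun a r β t s / (4 * r * Real.exp (s + t)))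

namespace MDP

def U (p q r t s : ℝ) : ℝ :=
  (Real.exp (s + t) + Real.exp (t - s) + p * Real.exp (s - t) + q * Real.exp (-s - t)) / (4 * r)

def Ut (p q r t s : ℝ) : ℝ :=
  (Real.exp (s + t) + Real.exp (t - s) - p * Real.exp (s - t) - q * Real.exp (-s - t)) / (4 * r)

def Us (p q r t s : ℝ) : ℝ :=
  (Real.exp (s + t) - Real.exp (t - s) + p * Real.exp (s - t) - q * Real.exp (-s - t)) / (4 * r)

def Cf (p q r t s : ℝ) : ℝ :=
  (Real.exp (s + t) - Real.exp (t - s) - p * Real.exp (s - t) + q * Real.exp (-s - t)) / (4 * r)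

lemma sqrt_pos_of_one_lt {x : ℝ} (hx : 1 < x) : 0 < Real.sqrt (x ^ 2 - 1) :=
  Real.sqrt_pos.2 (by nlinarith)

lemma cosh_sinh_arcosh {x : ℝ} (hx : 1 ≤ x) :
    Real.cosh (_root_.arcosh x) = x ∧ Real.sinh (_root_.arcosh x) = Real.sqrt (x ^ 2 - 1) := by
  have h0 : (0:ℝ) ≤ x ^ 2 - 1 := by nlinarith
  have hs : Real.sqrt (x ^ 2 - 1) ^ 2 = x ^ 2 - 1 := Real.sq_sqrt h0
  have hsn : 0 ≤ Real.sqrt (x ^ 2 - 1) := Real.sqrt_nonneg _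
  have hy : 0 < x + Real.sqrt (x ^ 2 - 1) := by nlinarith
  have hinv : (x + Real.sqrt (x ^ 2 - 1))⁻¹ = x - Real.sqrt (x ^ 2 - 1) :=
    inv_eq_of_mul_eq_one_right (by nlinarith)
  constructor
  · rw [_root_.arcosh, Real.cosh_eq, Real.exp_neg, Real.exp_log hy, hinv]; ring
  · rw [_root_.arcosh, Real.sinh_eq, Real.exp_neg, Real.exp_log hy, hinv]; ring

lemma hasDerivAt_arcosh {x : ℝ} (hx : 1 < x) :
    HasDerivAt _root_.arcosh (1 / Real.sqrt (x ^ 2 - 1)) x := by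
  have h0 : (0:ℝ) < x ^ 2 - 1 := by nlinarith
  have hsp : 0 < Real.sqrt (x ^ 2 - 1) := Real.sqrt_pos.2 h0
  have hs : Real.sqrt (x ^ 2 - 1) ^ 2 = x ^ 2 - 1 := Real.sq_sqrt h0.le
  have hy : 0 < x + Real.sqrt (x ^ 2 - 1) := by positivity
  have h1 : HasDerivAt (fun y : ℝ => y ^ 2 - 1) (2 * x) x := by
    simpa using ((hasDerivAt_pow 2 x).sub_const 1)
  have h2 : HasDerivAt (fun y : ℝ => Real.sqrt (y ^ 2 - 1))
      (1 / (2 * Real.sqrt (x ^ 2 - 1)) * (2 * x)) x :=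
    (Real.hasDerivAt_sqrt h0.ne').comp x h1
  have h3 : HasDerivAt (fun y : ℝ => y + Real.sqrt (y ^ 2 - 1))
      (1 + 1 / (2 * Real.sqrt (x ^ 2 - 1)) * (2 * x)) x := (hasDerivAt_id x).add h2
  have h4 := (Real.hasDerivAt_log hy.ne').comp x h3
  have : (x + Real.sqrt (x ^ 2 - 1))⁻¹ * (1 + 1 / (2 * Real.sqrt (x ^ 2 - 1)) * (2 * x)) =
      1 / Real.sqrt (x ^ 2 - 1) := by
    rw [inv_mul_eq_div, div_eq_div_iff hy.ne' hsp.ne']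
    field_simp
    nlinarith
  have h5 : HasDerivAt (fun y : ℝ => Real.log (y + Real.sqrt (y ^ 2 - 1)))
      (1 / Real.sqrt (x ^ 2 - 1)) x := by
    rw [← this]; exact h4
  exact h5

lemma hasDerivAt_U_t (p q r s t : ℝ) :
    HasDerivAt (fun t' => U p q r t' s) (Ut p q r t s) t := by
  have h1 : HasDerivAt (fun t' : ℝ => Real.exp (s + t')) (Real.exp (s + t)) t := by
    simpa [Function.comp_def] using (Real.hasDerivAt_exp (s + t)).comp t ((hasDerivAt_id t).const_add s)
  have h2 : HasDerivAt (fun t' : ℝ => Real.exp (t' - s)) (Real.exp (t - s)) t := by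
    simpa [Function.comp_def] using (Real.hasDerivAt_exp (t - s)).comp t ((hasDerivAt_id t).sub_const s)
  have h3 : HasDerivAt (fun t' : ℝ => Real.exp (s - t')) (Real.exp (s - t) * (-1)) t := by
    simpa [Function.comp_def] using (Real.hasDerivAt_exp (s - t)).comp t ((hasDerivAt_id t).const_sub s)
  have h4 : HasDerivAt (fun t' : ℝ => Real.exp (-s - t')) (Real.exp (-s - t) * (-1)) t := by
    simpa [Function.comp_def] using (Real.hasDerivAt_exp (-s - t)).comp t ((hasDerivAt_id t).const_sub (-s))
  have := (((h1.add h2).add (h3.const_mul p)).add (h4.const_mul q)).div_const (4 * r)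
  refine this.congr_deriv ?_
  unfold Ut; ring

lemma hasDerivAt_U_s (p q r t s : ℝ) :
    HasDerivAt (fun s' => U p q r t s') (Us p q r t s) s := by
  have h1 : HasDerivAt (fun s' : ℝ => Real.exp (s' + t)) (Real.exp (s + t)) s := by
    simpa [Function.comp_def] using (Real.hasDerivAt_exp (s + t)).comp s ((hasDerivAt_id s).add_const t)
  have h2 : HasDerivAt (fun s' : ℝ => Real.exp (t - s')) (Real.exp (t - s) * (-1)) s := by
    simpa [Function.comp_def] using (Real.hasDerivAt_exp (t - s)).comp s ((hasDerivAt_id s).const_sub t)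
  have h3 : HasDerivAt (fun s' : ℝ => Real.exp (s' - t)) (Real.exp (s - t)) s := by
    simpa [Function.comp_def] using (Real.hasDerivAt_exp (s - t)).comp s ((hasDerivAt_id s).sub_const t)
  have h4 : HasDerivAt (fun s' : ℝ => Real.exp (-s' - t)) (Real.exp (-s - t) * (-1)) s := by
    have hlin : HasDerivAt (fun s' : ℝ => -s' - t) (-1) s := by
      simpa using ((hasDerivAt_id s).neg.sub_const t)
    simpa [Function.comp_def] using (Real.hasDerivAt_exp (-s - t)).comp s hlin
  have := (((h1.add h2).add (h3.const_mul p)).add (h4.const_mul q)).div_const (4 * r)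
  refine this.congr_deriv ?_
  unfold Us; ring

lemma hasDerivAt_Ut_s (p q r t s : ℝ) :
    HasDerivAt (fun s' => Ut p q r t s') (Cf p q r t s) s := by
  have h1 : HasDerivAt (fun s' : ℝ => Real.exp (s' + t)) (Real.exp (s + t)) s := by
    simpa [Function.comp_def] using (Real.hasDerivAt_exp (s + t)).comp s ((hasDerivAt_id s).add_const t)
  have h2 : HasDerivAt (fun s' : ℝ => Real.exp (t - s')) (Real.exp (t - s) * (-1)) s := by
    simpa [Function.comp_def] using (Real.hasDerivAt_exp (t - s)).comp s ((hasDerivAt_id s).const_sub t)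
  have h3 : HasDerivAt (fun s' : ℝ => Real.exp (s' - t)) (Real.exp (s - t)) s := by
    simpa [Function.comp_def] using (Real.hasDerivAt_exp (s - t)).comp s ((hasDerivAt_id s).sub_const t)
  have h4 : HasDerivAt (fun s' : ℝ => Real.exp (-s' - t)) (Real.exp (-s - t) * (-1)) s := by
    have hlin : HasDerivAt (fun s' : ℝ => -s' - t) (-1) s := by
      simpa using ((hasDerivAt_id s).neg.sub_const t)
    simpa [Function.comp_def] using (Real.hasDerivAt_exp (-s - t)).comp s hlin
  have := (((h1.add h2).sub (h3.const_mul p)).sub (h4.const_mul q)).div_const (4 * r)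
  refine this.congr_deriv ?_
  unfold Cf; ring

lemma continuous_U_s (p q r t : ℝ) : Continuous (fun s' => U p q r t s') := by
  unfold U; fun_prop

lemma final_algebra (p q r ac t s : ℝ) (hr : r ≠ 0) (hpq : q - p = 4 * r * ac) :
    4 * r ^ 2 * (Cf p q r t s * (U p q r t s ^ 2 - 1) -
        Ut p q r t s * U p q r t s * Us p q r t s) =
      (ac - r) * (Real.exp (s + t) + q * Real.exp (-s - t)) +
        (ac + r) * (p * Real.exp (s - t) + Real.exp (t - s)) := by
  have h14 : Real.exp (s + t) * Real.exp (-s - t) = 1 := by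
    rw [← Real.exp_add]; norm_num
  have h23 : Real.exp (t - s) * Real.exp (s - t) = 1 := by
    rw [← Real.exp_add]; norm_num
  have hX1 : Real.exp (s + t) ≠ 0 := (Real.exp_pos _).ne'
  have hX2 : Real.exp (t - s) ≠ 0 := (Real.exp_pos _).ne'
  have hX4 : Real.exp (-s - t) = 1 / Real.exp (s + t) := by
    field_simp; linarith [h14]
  have hX3 : Real.exp (s - t) = 1 / Real.exp (t - s) := by
    field_simp; linarith [h23]
  have hq : q = p + 4 * r * ac := by linarith
  unfold Cf U Ut Us
  rw [hX4, hX3, hq]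
  field_simp
  ring

end MDP

/-- The mixed second derivative of `φ`:
`4r² (sinh φ)³ φ''_st = (a cos β − r)(e^{s+t} + d₂²e^{−s−t}) + (a cos β + r)(d₁²e^{s−t} + e^{t−s})`. -/
theorem mixed_derivative_phi (a r β t s : ℝ) (ha : 0 ≤ a) (hr : 0 < r)
    (hβ : β ∈ Set.Ioc 0 (π / 2))
    (h : 4 * r * Real.exp (s + t) < Afun a r β t s) :
    4 * r ^ 2 * Real.sinh (phi a r β t s) ^ 3 *
        deriv (fun s' => deriv (fun t' => phi a r β t' s') t) s =
      (a * Real.cos β - r) * (Real.exp (s + t) + d2 a r β ^ 2 * Real.exp (-s - t)) +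
        (a * Real.cos β + r) * (d1 a r β ^ 2 * Real.exp (s - t) + Real.exp (t - s)) := by
  obtain ⟨hβ0, hβ2⟩ := hβ
  have hcos0 : 0 ≤ Real.cos β :=
    Real.cos_nonneg_of_mem_Icc ⟨by linarith [Real.pi_pos], hβ2⟩
  have hcos1 : Real.cos β ≤ 1 := Real.cos_le_one β
  set p := d1 a r β ^ 2 with hpdef
  set q := d2 a r β ^ 2 with hqdef
  have hp : p = a ^ 2 + r ^ 2 - 2 * a * r * Real.cos β := by
    rw [hpdef, d1]
    exact Real.sq_sqrt (by nlinarith [sq_nonneg (a - r), mul_nonneg ha hr.le])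
  have hq : q = a ^ 2 + r ^ 2 + 2 * a * r * Real.cos β := by
    rw [hqdef, d2]
    exact Real.sq_sqrt (by nlinarith [mul_nonneg (mul_nonneg (mul_nonneg (by norm_num : (0:ℝ) ≤ 2) ha) hr.le) hcos0])
  have hpq : q - p = 4 * r * (a * Real.cos β) := by rw [hp, hq]; ring
  have hEq : ∀ t' s', Afun a r β t' s' / (4 * r * Real.exp (s' + t')) = MDP.U p q r t' s' := by
    intro t' s'
    rw [Afun, MDP.U, div_eq_div_iff (by positivity) (by positivity)]
    simp only [two_mul, Real.exp_add, Real.exp_sub, Real.exp_neg]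
    field_simp
    ring
  have hphiEq : ∀ t' s', phi a r β t' s' = _root_.arcosh (MDP.U p q r t' s') := by
    intro t' s'; rw [phi, hEq]
  have h1U : 1 < MDP.U p q r t s := by
    rw [← hEq, lt_div_iff₀ (by positivity)]; linarith
  set S := Real.sqrt (MDP.U p q r t s ^ 2 - 1) with hSdef
  have hU21 : (0:ℝ) < MDP.U p q r t s ^ 2 - 1 := by nlinarith
  have hSpos : 0 < S := Real.sqrt_pos.2 hU21
  have hS2 : S ^ 2 = MDP.U p q r t s ^ 2 - 1 := Real.sq_sqrt hU21.le
  have hsinh : Real.sinh (phi a r β t s) = S := by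
    rw [hphiEq]; exact (MDP.cosh_sinh_arcosh h1U.le).2
  have hev : ∀ᶠ s' in nhds s, 1 < MDP.U p q r t s' :=
    (continuousAt_const).eventually_lt (MDP.continuous_U_s p q r t).continuousAt h1U
  have hinner : (fun s' => deriv (fun t' => phi a r β t' s') t) =ᶠ[nhds s]
      (fun s' => MDP.Ut p q r t s' / Real.sqrt (MDP.U p q r t s' ^ 2 - 1)) := by
    filter_upwards [hev] with s' h1'
    have hd : HasDerivAt (fun t' => phi a r β t' s')
        (1 / Real.sqrt (MDP.U p q r t s' ^ 2 - 1) * MDP.Ut p q r t s') t := by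
      have h2 : (fun t' => phi a r β t' s') = _root_.arcosh ∘ fun t' => MDP.U p q r t' s' := by
        funext t''; exact hphiEq t'' s'
      rw [h2]
      exact (MDP.hasDerivAt_arcosh h1').comp t (MDP.hasDerivAt_U_t p q r s' t)
    rw [hd.deriv]; ring
  have houter : deriv (fun s' => deriv (fun t' => phi a r β t' s') t) s =
      deriv (fun s' => MDP.Ut p q r t s' / Real.sqrt (MDP.U p q r t s' ^ 2 - 1)) s :=
    Filter.EventuallyEq.deriv_eq hinner
  have hsq : HasDerivAt (fun s' => MDP.U p q r t s' ^ 2 - 1)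
      (2 * MDP.U p q r t s * MDP.Us p q r t s) s := by
    simpa using ((MDP.hasDerivAt_U_s p q r t s).pow 2).sub_const 1
  have hsqrt : HasDerivAt (fun s' => Real.sqrt (MDP.U p q r t s' ^ 2 - 1))
      (1 / (2 * S) * (2 * MDP.U p q r t s * MDP.Us p q r t s)) s :=
    (Real.hasDerivAt_sqrt hU21.ne').comp s hsq
  have hF : HasDerivAt (fun s' => MDP.Ut p q r t s' / Real.sqrt (MDP.U p q r t s' ^ 2 - 1))
      ((MDP.Cf p q r t s * S - MDP.Ut p q r t s *
        (1 / (2 * S) * (2 * MDP.U p q r t s * MDP.Us p q r t s))) / S ^ 2) s :=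
    (MDP.hasDerivAt_Ut_s p q r t s).div hsqrt hSpos.ne'
  rw [hsinh, houter, hF.deriv]
  have key : 4 * r ^ 2 * S ^ 3 *
      ((MDP.Cf p q r t s * S - MDP.Ut p q r t s *
        (1 / (2 * S) * (2 * MDP.U p q r t s * MDP.Us p q r t s))) / S ^ 2) =
      4 * r ^ 2 * (MDP.Cf p q r t s * (MDP.U p q r t s ^ 2 - 1) -
        MDP.Ut p q r t s * MDP.U p q r t s * MDP.Us p q r t s) := by
    rw [← hS2]; field_simp
  rw [key]
  exact MDP.final_algebra p q r (a * Real.cos β) t s hr.ne' hpq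

end
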